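/- For every R ⊆ C(X_G, ℂ), the set Ω_R is a closed, hence compact, subset of X_G. -/

import Mathlib

/-- The space `X_G`: subsets `ξ` of `G × I` (with `I = J ⊔ {0}` realized as `Option J`,
`none` playing the role of `0`), identified with points of `{0,1}^(G × I)` with the
product topology, such that `(e, 0) ∈ ξ` and `(r, i) ∈ ξ` implies `(r, 0) ∈ ξ`. -/
def XG (G : Type*) [Group G] (J : Type*) : Set ((G × Option J) → Bool) :=
  {ξ | ξ (1, none) = true ∧ ∀ (r : G) (i : Option J), ξ (r, i) = true → ξ (r, none) = true}

/-- The translate `tξ = { (t r, i) : (r, i) ∈ ξ }`: `(g, i) ∈ tξ` iff `(t⁻¹ g, i) ∈ ξ`. -/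
def act {G : Type*} [Group G] {J : Type*} (t : G) (ξ : (G × Option J) → Bool) :
    (G × Option J) → Bool :=
  fun x => ξ (t⁻¹ * x.1, x.2)

/-- If `ξ ∈ X_G` and `(t, 0) ∈ ξ`, then `t⁻¹ξ ∈ X_G`. -/
theorem act_inv_mem {G : Type*} [Group G] {J : Type*} {t : G}
    {ξ : (G × Option J) → Bool} (hξ : ξ ∈ XG G J) (h : ξ (t, none) = true) :
    act t⁻¹ ξ ∈ XG G J := by
  constructor
  · show ξ (t⁻¹⁻¹ * 1, none) = true
    rw [inv_inv, mul_one]; exact h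
  · intro r i hri
    exact hξ.2 _ _ hri

/-- Given `R ⊆ C(X_G, ℂ)`, the set
`Ω_R = { ξ ∈ X_G : f(t⁻¹ξ) = 0 for every f ∈ R and every t ∈ G with (t,0) ∈ ξ }`. -/
def OmegaR {G : Type*} [Group G] {J : Type*} (R : Set C(XG G J, ℂ)) :
    Set (XG G J) :=
  {ξ | ∀ f ∈ R, ∀ t : G, ∀ h : (ξ : (G × Option J) → Bool) (t, none) = true,
    f ⟨act t⁻¹ (ξ : (G × Option J) → Bool), act_inv_mem ξ.2 h⟩ = 0}

section Aux

variable {G : Type*} [Group G] {J : Type*}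

/-- open Classical in: a total version of the translation `t⁻¹ξ`, forced to land in `X_G`. -/
noncomputable def act' (t : G) (ξ : (G × Option J) → Bool) : (G × Option J) → Bool :=
  open Classical in fun x => (ξ (t * x.1, x.2) && ξ (t, none)) || decide (x = (1, none))

theorem act'_mem (t : G) {ξ : (G × Option J) → Bool} (hξ : ξ ∈ XG G J) :
    act' t ξ ∈ XG G J := by
  constructor
  · simp [act']
  · intro r i hri
    rcases Bool.or_eq_true _ _ |>.mp hri with h | h
    · rcases Bool.and_eq_true _ _ |>.mp h with ⟨h1, h2⟩
      have := hξ.2 (t * r) i h1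
      simp [act', this, h2]
    · have : (r, i) = ((1 : G), (none : Option J)) := by simpa using h
      rw [Prod.mk.injEq] at this
      simp [act', this.1]

theorem act'_eq (t : G) {ξ : (G × Option J) → Bool} (ht : ξ (t, none) = true) :
    act' t ξ = act t⁻¹ ξ := by
  funext x
  simp only [act', act, inv_inv, ht, Bool.and_true]
  by_cases hx : x = ((1 : G), (none : Option J))
  · simp [hx, ht]
  · simp [hx]

theorem continuous_act' (t : G) :
    Continuous (fun ξ : XG G J => act' t (ξ : (G × Option J) → Bool)) := by
  classical
  apply continuous_pi
  intro x
  have h1 : Continuous (fun ξ : XG G J => (ξ : (G × Option J) → Bool) (t * x.1, x.2)) :=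
    (continuous_apply _).comp continuous_subtype_val
  have h2 : Continuous (fun ξ : XG G J => (ξ : (G × Option J) → Bool) (t, none)) :=
    (continuous_apply _).comp continuous_subtype_val
  exact (continuous_of_discreteTopology
    (f := fun p : Bool × Bool => (p.1 && p.2) || decide (x = ((1:G), (none : Option J))))).comp
    (h1.prodMk h2)

theorem XG_isClosed : IsClosed (XG G J) := by
  have : XG G J = {ξ : (G × Option J) → Bool | ξ (1, none) = true} ∩
      ⋂ (r : G) (i : Option J),
        ({ξ : (G × Option J) → Bool | ξ (r, i) = false} ∪ {ξ | ξ (r, none) = true}) := by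
    ext ξ
    simp only [XG, Set.mem_inter_iff, Set.mem_setOf_eq, Set.mem_iInter, Set.mem_union]
    constructor
    · rintro ⟨h1, h2⟩
      refine ⟨h1, fun r i => ?_⟩
      by_cases h : ξ (r, i) = true
      · exact Or.inr (h2 r i h)
      · exact Or.inl (by simpa using h)
    · rintro ⟨h1, h2⟩
      refine ⟨h1, fun r i h => ?_⟩
      rcases h2 r i with h' | h'
      · rw [h] at h'; exact absurd h' (by simp)
      · exact h'
  rw [this]
  refine IsClosed.inter ?_ (isClosed_iInter fun r => isClosed_iInter fun i => ?_)
  · exact isClosed_eq (continuous_apply _) continuous_const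
  · exact IsClosed.union
      (isClosed_eq (continuous_apply _) continuous_const)
      (isClosed_eq (continuous_apply _) continuous_const)

end Aux

/-- For every `R ⊆ C(X_G, ℂ)`, the set `Ω_R` is a closed, hence compact, subset
of `X_G`. -/
theorem OmegaR_isClosed_isCompact (G : Type*) [Group G] (J : Type*)
    (R : Set C(XG G J, ℂ)) :
    IsClosed (OmegaR R) ∧ IsCompact (OmegaR R) := by
  have hclosed : IsClosed (OmegaR R) := by
    have heq : OmegaR R = ⋂ (f ∈ R) (t : G),
        ({ξ : XG G J | (ξ : (G × Option J) → Bool) (t, none) = false} ∪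
         {ξ : XG G J | f ⟨act' t (ξ : (G × Option J) → Bool), act'_mem t ξ.2⟩ = 0}) := by
      ext ξ
      simp only [OmegaR, Set.mem_setOf_eq, Set.mem_iInter, Set.mem_union]
      constructor
      · intro hξ f hf t
        by_cases ht : (ξ : (G × Option J) → Bool) (t, none) = true
        · refine Or.inr ?_
          have := hξ f hf t ht
          have hval : (⟨act' t (ξ : (G × Option J) → Bool), act'_mem t ξ.2⟩ : XG G J) =
              ⟨act t⁻¹ (ξ : (G × Option J) → Bool), act_inv_mem ξ.2 ht⟩ := by
            exact Subtype.ext (act'_eq t ht)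
          rw [hval]
          exact this
        · exact Or.inl (by simpa using ht)
      · intro h f hf t ht
        rcases h f hf t with h' | h'
        · rw [ht] at h'; exact absurd h' (by simp)
        · have hval : (⟨act' t (ξ : (G × Option J) → Bool), act'_mem t ξ.2⟩ : XG G J) =
              ⟨act t⁻¹ (ξ : (G × Option J) → Bool), act_inv_mem ξ.2 ht⟩ :=
            Subtype.ext (act'_eq t ht)
          rw [hval] at h'
          exact h'
    rw [heq]
    refine isClosed_iInter fun f => isClosed_iInter fun _ => isClosed_iInter fun t => ?_
    refine IsClosed.union ?_ ?_
    · exact isClosed_eq ((continuous_apply _).comp continuous_subtype_val) continuous_const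
    · have hcont : Continuous (fun ξ : XG G J =>
          f ⟨act' t (ξ : (G × Option J) → Bool), act'_mem t ξ.2⟩) :=
        f.continuous.comp (Continuous.subtype_mk (continuous_act' t) _)
      exact isClosed_eq hcont continuous_const
  have : CompactSpace (XG G J) := isCompact_iff_compactSpace.mp XG_isClosed.isCompact
  exact ⟨hclosed, hclosed.isCompact⟩
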